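/- (Antiholomorphic involution on Floquet solutions.) Let Λ ⊂ ℂ be a lattice, let U : ℂ → ℂ be Λ-periodic, and let ψ = (ψ₁, ψ₂) : ℂ → ℂ² be a differentiable solution of the Dirac equation ∂ψ₂ = −Uψ₁, ∂̄ψ₁ = Ū·ψ₂ (the operator with potentials U and V = Ū) which is a Floquet function with quasimomenta k = (k₁, k₂) ∈ ℂ², i.e. ψ(z + γ) = e^{2πi(k₁γ¹ + k₂γ²)} ψ(z) for all γ = γ¹ + iγ² ∈ Λ. Then ψ* = (−conj(ψ₂), conj(ψ₁)) is also a solution of the same Dirac equation and is a Floquet function with quasimomenta −k̄ = (−conj(k₁), −conj(k₂)): ψ*(z + γ) = e^{2πi(−conj(k₁)γ¹ − conj(k₂)γ²)} ψ*(z) for all γ ∈ Λ. -/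
import Mathlib


/-- The Wirtinger derivative `∂f = (1/2)(∂f/∂x − i ∂f/∂y)`. -/
noncomputable def wDeriv (f : ℂ → ℂ) (z : ℂ) : ℂ :=
  (fderiv ℝ f z 1 - Complex.I * fderiv ℝ f z Complex.I) / 2

/-- The Wirtinger derivative `∂̄f = (1/2)(∂f/∂x + i ∂f/∂y)`. -/
noncomputable def wDerivBar (f : ℂ → ℂ) (z : ℂ) : ℂ :=
  (fderiv ℝ f z 1 + Complex.I * fderiv ℝ f z Complex.I) / 2

/-- Antiholomorphic involution on Floquet solutions: if `ψ` solves the Dirac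
equation with potentials `(U, Ū)` (`U` being `Λ`-periodic) and is a Floquet function with
quasimomenta `k = (k₁, k₂)`, then `ψ* = (−ψ̄₂, ψ̄₁)` solves the same equation and is a
Floquet function with quasimomenta `−k̄`. -/
lemma fderiv_conj_apply (f : ℂ → ℂ) (hf : Differentiable ℝ f) (z v : ℂ) :
    fderiv ℝ (fun w => starRingEnd ℂ (f w)) z v = starRingEnd ℂ (fderiv ℝ f z v) := by
  have h := Complex.conjCLE.comp_fderiv (f := f) (x := z)
  have e : (fun w => starRingEnd ℂ (f w)) = (Complex.conjCLE : ℂ → ℂ) ∘ f := rfl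
  rw [e, h]
  rfl

lemma wDeriv_conj (f : ℂ → ℂ) (hf : Differentiable ℝ f) (z : ℂ) :
    wDeriv (fun w => starRingEnd ℂ (f w)) z = starRingEnd ℂ (wDerivBar f z) := by
  simp only [wDeriv, wDerivBar, fderiv_conj_apply f hf, map_div₀, map_add, map_mul,
    Complex.conj_I, map_ofNat]
  ring

lemma wDerivBar_conj (f : ℂ → ℂ) (hf : Differentiable ℝ f) (z : ℂ) :
    wDerivBar (fun w => starRingEnd ℂ (f w)) z = starRingEnd ℂ (wDeriv f z) := by
  simp only [wDeriv, wDerivBar, fderiv_conj_apply f hf, map_div₀, map_sub, map_mul,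
    Complex.conj_I, map_ofNat]
  ring

lemma wDerivBar_neg (f : ℂ → ℂ) (z : ℂ) :
    wDerivBar (fun w => -(f w)) z = -(wDerivBar f z) := by
  simp [wDerivBar, fderiv_neg, neg_div, mul_neg, neg_add]
  ring

theorem floquet_antiholomorphic_involution (Λ : AddSubgroup ℂ) (U : ℂ → ℂ)
    (ψ₁ ψ₂ : ℂ → ℂ) (k₁ k₂ : ℂ)
    (hψ₁ : Differentiable ℝ ψ₁) (hψ₂ : Differentiable ℝ ψ₂)
    (hUper : ∀ z : ℂ, ∀ γ ∈ Λ, U (z + γ) = U z)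
    (hD₂ : ∀ z : ℂ, wDeriv ψ₂ z = -(U z) * ψ₁ z)
    (hD₁ : ∀ z : ℂ, wDerivBar ψ₁ z = starRingEnd ℂ (U z) * ψ₂ z)
    (hFl₁ : ∀ z : ℂ, ∀ γ ∈ Λ,
      ψ₁ (z + γ) = Complex.exp (2 * Real.pi * Complex.I * (k₁ * γ.re + k₂ * γ.im)) * ψ₁ z)
    (hFl₂ : ∀ z : ℂ, ∀ γ ∈ Λ,
      ψ₂ (z + γ) = Complex.exp (2 * Real.pi * Complex.I * (k₁ * γ.re + k₂ * γ.im)) * ψ₂ z) :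
    (∀ z : ℂ, wDeriv (fun w => starRingEnd ℂ (ψ₁ w)) z
        = -(U z) * (-(starRingEnd ℂ (ψ₂ z))))
    ∧ (∀ z : ℂ, wDerivBar (fun w => -(starRingEnd ℂ (ψ₂ w))) z
        = starRingEnd ℂ (U z) * starRingEnd ℂ (ψ₁ z))
    ∧ (∀ z : ℂ, ∀ γ ∈ Λ,
      -(starRingEnd ℂ (ψ₂ (z + γ)))
        = Complex.exp (2 * Real.pi * Complex.I
            * ((-(starRingEnd ℂ k₁)) * γ.re + (-(starRingEnd ℂ k₂)) * γ.im))
          * (-(starRingEnd ℂ (ψ₂ z))))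
    ∧ (∀ z : ℂ, ∀ γ ∈ Λ,
      starRingEnd ℂ (ψ₁ (z + γ))
        = Complex.exp (2 * Real.pi * Complex.I
            * ((-(starRingEnd ℂ k₁)) * γ.re + (-(starRingEnd ℂ k₂)) * γ.im))
          * starRingEnd ℂ (ψ₁ z)) := by
  have key : ∀ γ : ℂ, Complex.exp (2 * Real.pi * Complex.I
      * ((-(starRingEnd ℂ k₁)) * γ.re + (-(starRingEnd ℂ k₂)) * γ.im))
      = starRingEnd ℂ (Complex.exp (2 * Real.pi * Complex.I * (k₁ * γ.re + k₂ * γ.im))) := by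
    intro γ
    rw [← Complex.exp_conj]
    congr 1
    simp only [map_mul, map_add, Complex.conj_I, Complex.conj_ofReal, map_ofNat]
    ring
  refine ⟨?_, ?_, ?_, ?_⟩
  · intro z
    rw [wDeriv_conj ψ₁ hψ₁, hD₁]
    simp only [map_mul, Complex.conj_conj]
    ring
  · intro z
    rw [wDerivBar_neg, wDerivBar_conj ψ₂ hψ₂, hD₂]
    simp only [map_mul, map_neg]
    ring
  · intro z γ hγ
    rw [hFl₂ z γ hγ, map_mul, key]
    ring
  · intro z γ hγ
    rw [hFl₁ z γ hγ, map_mul, key]
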